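/- Let P be a graph that is a disjoint union of paths and cycles on vertex set {1,…,t} with t ≥ 11. Then there exists a subset O ⊆ {1,…,t} with |O| = ⌈(t+1)/2⌉ containing both 1 and t, such that at most two vertices of O have a neighbor (in P, possibly after adding one edge joining the endpoints of a path component) outside O, and if exactly two such vertices exist then each has at most one neighbor outside O. -/

import Mathlib

set_option linter.unusedSectionVars false
set_option maxHeartbeats 1000000

open SimpleGraph Finset

variable {V : Type*} [Fintype V] [DecidableEq V] {G : SimpleGraph V}

/-- `S` is connected in `G` via walks staying in `S`. -/
def Conn (G : SimpleGraph V) (S : Finset V) : Prop :=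
  S.Nonempty ∧ ∀ a ∈ S, ∀ b ∈ S, ∃ w : G.Walk a b, ∀ z ∈ w.support, z ∈ S

/-- To prove `Conn` it suffices to connect everything to a hub. -/
lemma conn_of_hub {S : Finset V} {h0 : V} (hh : h0 ∈ S)
    (key : ∀ b ∈ S, ∃ w : G.Walk h0 b, ∀ z ∈ w.support, z ∈ S) : Conn G S := by
  refine ⟨⟨h0, hh⟩, ?_⟩
  intro a ha b hb
  obtain ⟨w1, hw1⟩ := key a ha
  obtain ⟨w2, hw2⟩ := key b hb
  refine ⟨w1.reverse.append w2, ?_⟩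
  intro z hz
  rcases (SimpleGraph.Walk.mem_support_append_iff _ _).mp hz with hz | hz
  · rw [SimpleGraph.Walk.support_reverse, List.mem_reverse] at hz
    exact hw1 z hz
  · exact hw2 z hz

lemma conn_singleton (G : SimpleGraph V) (v : V) : Conn G {v} := by
  refine conn_of_hub (h0 := v) (by simp) ?_
  intro b hb
  simp only [Finset.mem_singleton] at hb
  subst hb
  exact ⟨SimpleGraph.Walk.nil, by simp⟩

lemma conn_insert {S : Finset V} (h : Conn G S) {u v : V} (hu : u ∈ S) (ha : G.Adj u v) :
    Conn G (insert v S) := by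
  classical
  obtain ⟨hne, hw⟩ := h
  refine conn_of_hub (Finset.mem_insert_self _ _) ?_
  intro b hb
  rcases Finset.mem_insert.mp hb with rfl | hb
  · exact ⟨SimpleGraph.Walk.nil, by simp⟩
  · obtain ⟨w, hwS⟩ := hw u hu b hb
    refine ⟨SimpleGraph.Walk.cons ha.symm w, ?_⟩
    intro z hz
    rw [SimpleGraph.Walk.support_cons, List.mem_cons] at hz
    rcases hz with rfl | hz
    · exact Finset.mem_insert_self _ _
    · exact Finset.mem_insert_of_mem (hwS z hz)

/-- The support of any walk is a `Conn` set. -/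
lemma conn_support {a b : V} (p : G.Walk a b) : Conn G p.support.toFinset := by
  classical
  refine conn_of_hub (h0 := a) (by simp) ?_
  intro v hv
  rw [List.mem_toFinset] at hv
  refine ⟨p.takeUntil v hv, ?_⟩
  intro z hz
  rw [List.mem_toFinset]
  exact p.support_takeUntil_subset hv hz

lemma inner_count [DecidableRel G.Adj] {S : Finset V} (hS : Conn G S) :
    2 * (S.card - 1) ≤ ∑ v ∈ S, (S.filter (G.Adj v)).card := by
  classical
  obtain ⟨⟨a, ha⟩, hconn⟩ := hS
  set R : V → ℕ → Prop := fun v n => ∃ w : G.Walk v a, w.length = n ∧ ∀ z ∈ w.support, z ∈ S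
    with hR
  have hex : ∀ v ∈ S, {n | R v n}.Nonempty := by
    intro v hv
    obtain ⟨w, hw⟩ := hconn v hv a ha
    exact ⟨w.length, w, rfl, hw⟩
  set dS : V → ℕ := fun v => sInf {n | R v n} with hdS
  have step : ∀ v, v ∈ S → v ≠ a → ∃ u, G.Adj v u ∧ u ∈ S ∧ dS u < dS v := by
    intro v hv hva
    have hmem : R v (dS v) := Nat.sInf_mem (hex v hv)
    obtain ⟨w, hwl, hws⟩ := hmem
    cases w with
    | nil => exact absurd rfl hva
    | cons h w' =>
      rename_i u
      refine ⟨u, h, ?_, ?_⟩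
      · exact hws u (by simp [SimpleGraph.Walk.support_cons])
      · have hRu : R u w'.length := ⟨w', rfl, fun z hz => hws z (by
          rw [SimpleGraph.Walk.support_cons]; exact List.mem_cons_of_mem _ hz)⟩
        have h1 : dS u ≤ w'.length := Nat.sInf_le hRu
        have h2 : w'.length < dS v := by
          rw [← hwl]; simp [SimpleGraph.Walk.length_cons]
        omega
  choose! g hg1 hg2 hg3 using step
  set T : Finset (V × V) := (S ×ˢ S).filter (fun q => G.Adj q.1 q.2) with hT
  have hsub1 : (S.erase a).image (fun v => (v, g v)) ⊆ T := by
    intro q hq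
    obtain ⟨v, hv, rfl⟩ := Finset.mem_image.mp hq
    have hvS := Finset.mem_of_mem_erase hv
    have hvna := Finset.ne_of_mem_erase hv
    simp only [hT, Finset.mem_filter, Finset.mem_product]
    exact ⟨⟨hvS, hg2 v hvS hvna⟩, hg1 v hvS hvna⟩
  have hsub2 : (S.erase a).image (fun v => (g v, v)) ⊆ T := by
    intro q hq
    obtain ⟨v, hv, rfl⟩ := Finset.mem_image.mp hq
    have hvS := Finset.mem_of_mem_erase hv
    have hvna := Finset.ne_of_mem_erase hv
    simp only [hT, Finset.mem_filter, Finset.mem_product]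
    exact ⟨⟨hg2 v hvS hvna, hvS⟩, (hg1 v hvS hvna).symm⟩
  have hc1 : ((S.erase a).image (fun v => (v, g v))).card = S.card - 1 := by
    rw [Finset.card_image_of_injOn (fun x _ y _ h => congrArg Prod.fst h),
      Finset.card_erase_of_mem ha]
  have hc2 : ((S.erase a).image (fun v => (g v, v))).card = S.card - 1 := by
    rw [Finset.card_image_of_injOn (fun x _ y _ h => congrArg Prod.snd h),
      Finset.card_erase_of_mem ha]
  have hdisj : Disjoint ((S.erase a).image (fun v => (v, g v)))
      ((S.erase a).image (fun v => (g v, v))) := by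
    rw [Finset.disjoint_left]
    intro q hq1 hq2
    obtain ⟨v, hv, rfl⟩ := Finset.mem_image.mp hq1
    obtain ⟨u, hu, huv⟩ := Finset.mem_image.mp hq2
    have h1 : g u = v := congrArg Prod.fst huv
    have h2 : u = g v := congrArg Prod.snd huv
    have hvS := Finset.mem_of_mem_erase hv
    have hvna := Finset.ne_of_mem_erase hv
    have huS := Finset.mem_of_mem_erase hu
    have huna := Finset.ne_of_mem_erase hu
    have t1 := hg3 v hvS hvna
    have t2 := hg3 u huS huna
    rw [← h2] at t1
    rw [h1] at t2
    omega
  have hTcard : 2 * (S.card - 1) ≤ T.card := by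
    have := Finset.card_le_card (Finset.union_subset hsub1 hsub2)
    rw [Finset.card_union_of_disjoint hdisj, hc1, hc2] at this
    omega
  have hfib : T.card = ∑ v ∈ S, (S.filter (G.Adj v)).card := by
    rw [Finset.card_eq_sum_card_fiberwise (f := Prod.fst) (t := S)
      (fun q hq => (Finset.mem_product.mp (Finset.mem_filter.mp hq).1).1)]
    refine Finset.sum_congr rfl ?_
    intro v hv
    refine Finset.card_bij' (fun q _ => q.2) (fun u _ => (v, u)) ?_ ?_ ?_ ?_
    · rintro ⟨q1, q2⟩ hq
      obtain ⟨hqT, h1⟩ := Finset.mem_filter.mp hq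
      obtain ⟨hqP, hadj⟩ := Finset.mem_filter.mp hqT
      obtain ⟨hq1, hq2⟩ := Finset.mem_product.mp hqP
      simp only at h1 ⊢
      subst h1
      exact Finset.mem_filter.mpr ⟨hq2, hadj⟩
    · intro u hu
      obtain ⟨h1, h2⟩ := Finset.mem_filter.mp hu
      exact Finset.mem_filter.mpr
        ⟨Finset.mem_filter.mpr ⟨Finset.mem_product.mpr ⟨hv, h1⟩, h2⟩, rfl⟩
    · rintro ⟨q1, q2⟩ hq
      obtain ⟨hqT, h1⟩ := Finset.mem_filter.mp hq
      simp only at h1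
      subst h1
      rfl
    · intro u hu
      rfl
  omega

/-- In a `Conn` set with at least 2 elements, every vertex has a neighbor inside. -/
lemma exists_inner {S : Finset V} (hS : Conn G S) (h2 : 2 ≤ S.card) :
    ∀ v ∈ S, ∃ u ∈ S, G.Adj v u := by
  intro v hv
  obtain ⟨b, hb, hbv⟩ : ∃ b ∈ S, b ≠ v := by
    by_contra hc
    push_neg at hc
    have : S ⊆ {v} := fun z hz => Finset.mem_singleton.mpr (hc z hz)
    have := Finset.card_le_card this
    simp at this
    omega
  obtain ⟨w, hw⟩ := hS.2 v hv b hb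
  cases w with
  | nil => exact absurd rfl hbv.symm
  | cons h w' =>
    rename_i u
    exact ⟨u, hw u (by simp [SimpleGraph.Walk.support_cons]), h⟩

/-- In a max-degree-2 graph, a `Conn` set has at most 2 vertices of inner degree ≤ 1. -/
lemma low_inner_count [DecidableRel G.Adj] (hdeg : ∀ v, G.degree v ≤ 2) {S : Finset V}
    (hS : Conn G S) :
    (S.filter fun v => (S.filter (G.Adj v)).card ≤ 1).card ≤ 2 := by
  classical
  have hin : ∀ v, (S.filter (G.Adj v)).card ≤ 2 := by
    intro v
    calc (S.filter (G.Adj v)).card ≤ (G.neighborFinset v).card :=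
          Finset.card_le_card (fun u hu => by
            rw [SimpleGraph.mem_neighborFinset]
            exact (Finset.mem_filter.mp hu).2)
      _ ≤ 2 := hdeg v
  have hsum := inner_count hS
  set B := S.filter fun v => (S.filter (G.Adj v)).card ≤ 1 with hB
  have hsplit : ∑ v ∈ S, (S.filter (G.Adj v)).card ≤ 2 * S.card - B.card := by
    have h1 : ∑ v ∈ S, (S.filter (G.Adj v)).card
        = ∑ v ∈ B, (S.filter (G.Adj v)).card
          + ∑ v ∈ S.filter (fun v => ¬ (S.filter (G.Adj v)).card ≤ 1),
            (S.filter (G.Adj v)).card := by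
      rw [hB, Finset.sum_filter_add_sum_filter_not]
    have h2 : ∑ v ∈ B, (S.filter (G.Adj v)).card ≤ B.card * 1 := by
      apply Finset.sum_le_card_nsmul
      intro v hv
      exact (Finset.mem_filter.mp hv).2
    have h3 : ∑ v ∈ S.filter (fun v => ¬ (S.filter (G.Adj v)).card ≤ 1),
        (S.filter (G.Adj v)).card
        ≤ (S.filter (fun v => ¬ (S.filter (G.Adj v)).card ≤ 1)).card * 2 := by
      apply Finset.sum_le_card_nsmul
      intro v hv
      exact hin v
    have h4 : B.card + (S.filter (fun v => ¬ (S.filter (G.Adj v)).card ≤ 1)).card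
        = S.card := by
      rw [hB, Finset.card_filter_add_card_filter_not]
    omega
  have hBle : B.card ≤ S.card := Finset.card_le_card (Finset.filter_subset _ _)
  have hS1 : 1 ≤ S.card := Finset.card_pos.mpr hS.1
  omega


/-- `F` is closed under adjacency. -/
def ClosedS (G : SimpleGraph V) (F : Finset V) : Prop :=
  ∀ v ∈ F, ∀ u, G.Adj v u → u ∈ F

/-- Growth lemma: a union of a closed set and a connected set can be grown one
vertex at a time, keeping the same structure. -/
lemma build (G : SimpleGraph V) : ∀ (m : ℕ) (F S : Finset V), ClosedS G F → Conn G S →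
    Disjoint F S → (F ∪ S).card + m ≤ Fintype.card V →
    ∃ F' S' : Finset V, ClosedS G F' ∧ Conn G S' ∧ Disjoint F' S' ∧
      F ∪ S ⊆ F' ∪ S' ∧ (F' ∪ S').card = (F ∪ S).card + m := by
  intro m
  induction m with
  | zero => exact fun F S h1 h2 h3 _ => ⟨F, S, h1, h2, h3, Finset.Subset.refl _, by simp⟩
  | succ m ih =>
    intro F S hF hS hdisj hcard
    obtain ⟨z, hz⟩ : ∃ z, z ∉ F ∪ S := by
      by_contra hc
      push_neg at hc
      have h1 : (Finset.univ : Finset V) ⊆ F ∪ S := fun v _ => hc v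
      have h2 := Finset.card_le_card h1
      rw [Finset.card_univ] at h2
      omega
    by_cases hgrow : ∃ v, v ∉ F ∪ S ∧ ∃ u ∈ S, G.Adj u v
    · obtain ⟨v, hv, u, hu, hadj⟩ := hgrow
      have hins : Conn G (insert v S) := conn_insert hS hu hadj
      have hdisj' : Disjoint F (insert v S) := by
        rw [Finset.disjoint_left] at hdisj ⊢
        intro w hw hwi
        rcases Finset.mem_insert.mp hwi with rfl | hwS
        · exact hv (Finset.mem_union_left _ hw)
        · exact hdisj hw hwS
      have hkey : F ∪ insert v S = insert v (F ∪ S) := by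
        ext w
        simp only [Finset.mem_union, Finset.mem_insert]
        tauto
      have hcard1 : (F ∪ insert v S).card = (F ∪ S).card + 1 := by
        rw [hkey, Finset.card_insert_of_notMem hv]
      obtain ⟨F', S', a1, a2, a3, a4, a5⟩ := ih F (insert v S) hF hins hdisj' (by omega)
      refine ⟨F', S', a1, a2, a3, ?_, ?_⟩
      · exact fun w hw => a4 (by
          rcases Finset.mem_union.mp hw with h | h
          · exact Finset.mem_union_left _ h
          · exact Finset.mem_union_right _ (Finset.mem_insert_of_mem h))
      · rw [a5, hcard1]
        omega
    · push_neg at hgrow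
      have hFS : ClosedS G (F ∪ S) := by
        intro w hw u hadj
        rcases Finset.mem_union.mp hw with h | h
        · exact Finset.mem_union_left _ (hF w h u hadj)
        · by_contra hu
          exact hgrow u hu w h hadj
      have hdisj2 : Disjoint (F ∪ S) {z} := by
        rw [Finset.disjoint_left]
        intro w hw hwz
        rw [Finset.mem_singleton] at hwz
        subst hwz
        exact hz hw
      have hkey : (F ∪ S) ∪ {z} = insert z (F ∪ S) := by
        ext w
        simp only [Finset.mem_union, Finset.mem_insert, Finset.mem_singleton]
        tauto
      have hcard1 : ((F ∪ S) ∪ {z}).card = (F ∪ S).card + 1 := by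
        rw [hkey, Finset.card_insert_of_notMem hz]
      obtain ⟨F', S', a1, a2, a3, a4, a5⟩ := ih (F ∪ S) {z} hFS (conn_singleton G z)
        hdisj2 (by omega)
      refine ⟨F', S', a1, a2, a3, ?_, ?_⟩
      · exact fun w hw => a4 (Finset.mem_union_left _ hw)
      · rw [a5, hcard1]
        omega

/-- Restriction of a graph to a set of vertices (on the same vertex type). -/
def restrictG (G : SimpleGraph V) (A : Set V) : SimpleGraph V where
  Adj u v := G.Adj u v ∧ u ∈ A ∧ v ∈ A
  symm := ⟨by rintro u v ⟨h, h1, h2⟩; exact ⟨h.symm, h2, h1⟩⟩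
  loopless := ⟨fun v h => G.irrefl h.1⟩

lemma restrictG_le (G : SimpleGraph V) (A : Set V) : restrictG G A ≤ G :=
  fun _ _ h => h.1

/-- Transfer a walk along `H ≤ G`, with the same support and length. -/
lemma walk_mono {H : SimpleGraph V} (hle : H ≤ G) {a b : V} (w : H.Walk a b) :
    ∃ w' : G.Walk a b, w'.support = w.support ∧ w'.length = w.length := by
  induction w with
  | nil => exact ⟨SimpleGraph.Walk.nil, rfl, rfl⟩
  | cons h p ih =>
    obtain ⟨w', h1, h2⟩ := ih
    exact ⟨SimpleGraph.Walk.cons (hle h) w', by simp [SimpleGraph.Walk.support_cons, h1],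
      by simp [SimpleGraph.Walk.length_cons, h2]⟩

/-- On a geodesic, the distance to an intermediate vertex is the length of the prefix. -/
lemma dist_takeUntil {a b : V} {p : G.Walk a b} (hlen : p.length = G.dist a b)
    {v : V} (hv : v ∈ p.support) :
    G.dist a v = (p.takeUntil v hv).length ∧ (v ≠ b → (p.takeUntil v hv).length < p.length) := by
  have hspec := p.take_spec hv
  have hsum : (p.takeUntil v hv).length + (p.dropUntil v hv).length = p.length := by
    have := congrArg SimpleGraph.Walk.length hspec
    rwa [SimpleGraph.Walk.length_append] at this
  have h1 : G.dist a v ≤ (p.takeUntil v hv).length := SimpleGraph.dist_le _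
  have h2 : G.dist a b ≤ G.dist a v + (p.dropUntil v hv).length := by
    have hreach : G.Reachable a v := ⟨p.takeUntil v hv⟩
    obtain ⟨w, hwp, hwl⟩ := hreach.exists_path_of_dist
    have := SimpleGraph.dist_le (w.append (p.dropUntil v hv))
    rwa [SimpleGraph.Walk.length_append, hwl] at this
  constructor
  · omega
  · intro hvb
    rcases Nat.lt_or_ge (p.takeUntil v hv).length p.length with h | h
    · exact h
    · exfalso
      have hdrop : (p.dropUntil v hv).length = 0 := by omega
      exact hvb (SimpleGraph.Walk.eq_of_length_eq_zero hdrop)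

/-- A neighbor of the start of a path that lies on the path is its second vertex:
hence it is unique. -/
lemma unique_start_nbr {x y : V} {p : G.Walk x y} (hlen : p.length = G.dist x y)
    {w1 w2 : V} (h1 : w1 ∈ p.support) (h2 : w2 ∈ p.support)
    (a1 : G.Adj x w1) (a2 : G.Adj x w2) : w1 = w2 := by
  have key : ∀ w (hw : w ∈ p.support), G.Adj x w → ∃ L, p.support = x :: w :: L := by
    intro w hw haw
    have hd1 : G.dist x w = 1 := SimpleGraph.dist_eq_one_iff_adj.mpr haw
    have := (dist_takeUntil hlen hw).1
    rw [hd1] at this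
    set q1 := p.takeUntil w hw with hq1
    have hsupp : q1.support = [x, w] := by
      clear_value q1
      cases q1 with
      | nil => simp at this
      | cons h q' =>
        cases q' with
        | nil => simp
        | cons h' q'' => simp [SimpleGraph.Walk.length_cons] at this
    have hspec := p.take_spec hw
    have := congrArg SimpleGraph.Walk.support hspec
    rw [SimpleGraph.Walk.support_append, hsupp] at this
    exact ⟨_, this.symm⟩
  obtain ⟨L1, e1⟩ := key w1 h1 a1
  obtain ⟨L2, e2⟩ := key w2 h2 a2
  rw [e1] at e2
  simp only [List.cons.injEq] at e2
  exact e2.2.1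

/-- An interior vertex of a path in a max-degree-2 graph has all its neighbors
on the path. -/
lemma interior_nbrs [DecidableRel G.Adj] (hdeg : ∀ v, G.degree v ≤ 2)
    {x y : V} {p : G.Walk x y} (hp : p.IsPath)
    {v : V} (hv : v ∈ p.support) (hvx : v ≠ x) (hvy : v ≠ y)
    {u : V} (hadj : G.Adj v u) : u ∈ p.support := by
  classical
  have hspec := p.take_spec hv
  -- predecessor
  obtain ⟨a, haadj, hasupp⟩ : ∃ a, G.Adj v a ∧ a ∈ (p.takeUntil v hv).support := by
    have hq : (p.takeUntil v hv).reverse.support = (p.takeUntil v hv).support.reverse :=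
      SimpleGraph.Walk.support_reverse _
    rcases hq2 : (p.takeUntil v hv).reverse with _ | ⟨h, r⟩
    · exact absurd rfl hvx
    · rename_i a'
      refine ⟨a', h, ?_⟩
      have : a' ∈ (p.takeUntil v hv).reverse.support := by
        rw [hq2]
        simp [SimpleGraph.Walk.support_cons]
      rwa [hq, List.mem_reverse] at this
  -- successor
  obtain ⟨b, hbadj, hbsupp⟩ : ∃ b, G.Adj v b ∧ b ∈ (p.dropUntil v hv).support.tail := by
    rcases hq2 : p.dropUntil v hv with _ | ⟨h, r⟩
    · exact absurd rfl hvy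
    · rename_i b'
      refine ⟨b', h, ?_⟩
      rw [SimpleGraph.Walk.support_cons, List.tail_cons]
      exact SimpleGraph.Walk.start_mem_support r
  have hab : a ≠ b := by
    intro hEq
    have hnodup : p.support.Nodup := hp.support_nodup
    rw [← hspec, SimpleGraph.Walk.support_append] at hnodup
    have := (List.nodup_append'.mp hnodup).2.2
    exact this hasupp (hEq ▸ hbsupp)
  -- now u ∈ {a, b}
  have hmem : ∀ w, G.Adj v w → w = a ∨ w = b := by
    intro w hw
    by_contra hc
    push_neg at hc
    have hsub : {w, a, b} ⊆ G.neighborFinset v := by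
      intro z hz
      simp only [Finset.mem_insert, Finset.mem_singleton] at hz
      rcases hz with rfl | rfl | rfl
      · rwa [SimpleGraph.mem_neighborFinset]
      · rwa [SimpleGraph.mem_neighborFinset]
      · rwa [SimpleGraph.mem_neighborFinset]
    have hcard : ({w, a, b} : Finset V).card = 3 := by
      rw [Finset.card_insert_of_notMem (by simp [hc.1, hc.2]),
        Finset.card_insert_of_notMem (by simp [hab]), Finset.card_singleton]
    have := Finset.card_le_card hsub
    rw [hcard] at this
    have := hdeg v
    rw [SimpleGraph.degree] at this
    omega
  rcases hmem u hadj with rfl | rfl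
  · exact p.support_takeUntil_subset hv hasupp
  · exact p.support_dropUntil_subset hv (List.mem_of_mem_tail hbsupp)

open Classical in
/-- The set of vertices reachable from `x` after deleting `W \ {x}`. -/
noncomputable def sideComp (G : SimpleGraph V) (W : Finset V) (x : V) : Finset V :=
  Finset.univ.filter (fun v => (restrictG G {u | u ∉ W ∨ u = x}).Reachable x v)

lemma mem_sideComp {W : Finset V} {x v : V} :
    v ∈ sideComp G W x ↔ (restrictG G {u | u ∉ W ∨ u = x}).Reachable x v := by
  classical
  simp [sideComp]

lemma x_mem_sideComp {W : Finset V} {x : V} : x ∈ sideComp G W x :=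
  mem_sideComp.mpr (SimpleGraph.Reachable.refl x)

lemma sideComp_not_W {W : Finset V} {x v : V} (hv : v ∈ sideComp G W x) (hvx : v ≠ x) :
    v ∉ W := by
  obtain ⟨w⟩ := mem_sideComp.mp hv
  rcases hq : w.reverse with _ | ⟨h, r⟩
  · exact absurd rfl hvx
  · rcases h.2.1 with h' | h'
    · exact h'
    · exact absurd h' hvx

lemma sideComp_adj {W : Finset V} {x u v : V} (hu : u ∈ sideComp G W x)
    (h : (restrictG G {u | u ∉ W ∨ u = x}).Adj u v) : v ∈ sideComp G W x :=
  mem_sideComp.mpr ((mem_sideComp.mp hu).trans ⟨SimpleGraph.Walk.cons h SimpleGraph.Walk.nil⟩)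

lemma sideComp_gwalk {W : Finset V} {x v : V} (hv : v ∈ sideComp G W x) :
    ∃ w : G.Walk x v, (∀ z ∈ w.support, z ∈ sideComp G W x) ∧
      w.length + 1 ≤ (sideComp G W x).card := by
  classical
  have hr := mem_sideComp.mp hv
  obtain ⟨q, hqp, hql⟩ := hr.exists_path_of_dist
  have hsupp : ∀ z ∈ q.support, z ∈ sideComp G W x := by
    intro z hz
    exact mem_sideComp.mpr ⟨q.takeUntil z hz⟩
  obtain ⟨w, hws, hwl⟩ := walk_mono (restrictG_le G _) q
  have hcard : q.length + 1 ≤ (sideComp G W x).card := by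
    have h1 : q.support.toFinset.card = q.length + 1 := by
      rw [List.toFinset_card_of_nodup hqp.support_nodup, SimpleGraph.Walk.length_support]
    have h2 : q.support.toFinset ⊆ sideComp G W x := by
      intro z hz
      exact hsupp z (List.mem_toFinset.mp hz)
    have := Finset.card_le_card h2
    omega
  exact ⟨w, by rw [hws]; exact hsupp, by rw [hwl]; exact hcard⟩

lemma sideComp_dist {W : Finset V} {x v : V} (hv : v ∈ sideComp G W x) :
    G.Reachable x v ∧ G.dist x v + 1 ≤ (sideComp G W x).card := by
  obtain ⟨w, _, hc⟩ := sideComp_gwalk hv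
  exact ⟨⟨w⟩, by have := SimpleGraph.dist_le w; omega⟩

/-- Key lemma: if `x, y` are far apart on a geodesic in a max-degree-2 graph,
then the side-component of `x` contains a vertex of degree ≤ 1. -/
lemma side_lemma [DecidableRel G.Adj] (hdeg : ∀ v, G.degree v ≤ 2)
    {x y : V} (p : G.Walk x y) (hp : p.IsPath) (hlen : p.length = G.dist x y)
    {k : ℕ} (hk : k ≤ G.dist x y) (hk2 : 2 ≤ k)
    (hVk : Fintype.card V + 1 ≤ 2 * k) :
    ∃ e ∈ sideComp G p.support.toFinset x, G.degree e ≤ 1 := by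
  classical
  set W := p.support.toFinset with hW
  set C := sideComp G W x with hC
  set d := G.dist x y with hd
  have hxy : x ≠ y := by
    intro h
    subst h
    rw [SimpleGraph.dist_self] at hd
    omega
  have hWcard : W.card = d + 1 := by
    rw [hW, List.toFinset_card_of_nodup hp.support_nodup,
      SimpleGraph.Walk.length_support, hlen]
  have hWuniv : W ⊆ Finset.univ := Finset.subset_univ _
  have htd : d + 1 ≤ Fintype.card V := by
    have := Finset.card_le_card hWuniv
    rw [hWcard, Finset.card_univ] at this
    exact this
  -- the side component avoids W except for x
  have hCsub : C ⊆ insert x (Finset.univ \ W) := by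
    intro v hv
    rcases eq_or_ne v x with rfl | hvx
    · exact Finset.mem_insert_self _ _
    · exact Finset.mem_insert_of_mem (Finset.mem_sdiff.mpr
        ⟨Finset.mem_univ _, sideComp_not_W hv hvx⟩)
  have hCcard : C.card ≤ Fintype.card V - d := by
    have h1 := Finset.card_le_card hCsub
    have h2 : (insert x (Finset.univ \ W)).card ≤ 1 + (Fintype.card V - (d + 1)) := by
      have := Finset.card_insert_le x (Finset.univ \ W)
      rw [Finset.card_sdiff_of_subset hWuniv, Finset.card_univ, hWcard] at this
      omega
    omega
  -- no vertex of C is adjacent to y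
  have hky : ∀ v ∈ C, ¬ G.Adj v y := by
    intro v hv hadj
    obtain ⟨hreach, hdist⟩ := sideComp_dist hv
    obtain ⟨w, _, hwl⟩ := hreach.exists_path_of_dist
    have hdist' : G.dist x v + 1 ≤ C.card := by rw [hC]; exact hdist
    have hdy : d ≤ G.dist x v + 1 := by
      have h5 := SimpleGraph.dist_le (w.concat hadj)
      rw [SimpleGraph.Walk.length_concat, hwl, ← hd] at h5
      exact h5
    omega
  by_cases hx1 : G.degree x ≤ 1
  · exact ⟨x, x_mem_sideComp, hx1⟩
  have hx2 : G.degree x = 2 := by have := hdeg x; omega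
  -- second vertex of p
  obtain ⟨s, hs_adj, hs_supp⟩ : ∃ s, G.Adj x s ∧ s ∈ p.support := by
    cases p with
    | nil => exact absurd rfl hxy
    | cons h r => exact ⟨_, h, by simp [SimpleGraph.Walk.support_cons,
        SimpleGraph.Walk.start_mem_support]⟩
  -- the other neighbor w of x
  obtain ⟨w, hw_ne, hw_adj⟩ : ∃ w, w ≠ s ∧ G.Adj x w := by
    have hs_mem : s ∈ G.neighborFinset x := (SimpleGraph.mem_neighborFinset _ _ _).mpr hs_adj
    have : 0 < ((G.neighborFinset x).erase s).card := by
      rw [Finset.card_erase_of_mem hs_mem]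
      have h9 : (G.neighborFinset x).card = 2 := hx2
      omega
    obtain ⟨w, hw⟩ := Finset.card_pos.mp this
    exact ⟨w, Finset.ne_of_mem_erase hw,
      (SimpleGraph.mem_neighborFinset _ _ _).mp (Finset.mem_of_mem_erase hw)⟩
  have hnbrx : G.neighborFinset x = {s, w} := by
    symm
    apply Finset.eq_of_subset_of_card_le
    · intro z hz
      simp only [Finset.mem_insert, Finset.mem_singleton] at hz
      rcases hz with rfl | rfl
      · exact (SimpleGraph.mem_neighborFinset _ _ _).mpr hs_adj
      · exact (SimpleGraph.mem_neighborFinset _ _ _).mpr hw_adj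
    · have h9 : (G.neighborFinset x).card = 2 := hx2
      rw [Finset.card_insert_of_notMem (by simp [hw_ne.symm]),
        Finset.card_singleton, h9]
  have hwW : w ∉ W := by
    intro hwmem
    exact hw_ne (unique_start_nbr hlen (List.mem_toFinset.mp hwmem) hs_supp hw_adj hs_adj)
  have hwC : w ∈ C := sideComp_adj x_mem_sideComp ⟨hw_adj, Or.inr rfl, Or.inl hwW⟩
  have hsW : s ∈ W := List.mem_toFinset.mpr hs_supp
  have hsx : s ≠ x := fun h => G.irrefl (h ▸ hs_adj)
  have hsC : s ∉ C := fun h => (sideComp_not_W h hsx) hsW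
  -- the doubly-restricted graph K
  set K := restrictG G (↑C : Set V) with hK
  haveI : DecidableRel K.Adj := Classical.decRel _
  have hKadj : ∀ a b, K.Adj a b ↔ G.Adj a b ∧ a ∈ C ∧ b ∈ C := by
    intro a b
    rw [hK]
    simp [restrictG]
  have hKnbr_sub : ∀ v, K.neighborFinset v ⊆ G.neighborFinset v := by
    intro v z hz
    rw [SimpleGraph.mem_neighborFinset] at hz ⊢
    exact ((hKadj v z).mp hz).1
  have hdegKx : K.degree x = 1 := by
    have : K.neighborFinset x = {w} := by
      ext z
      rw [SimpleGraph.mem_neighborFinset, hKadj, Finset.mem_singleton]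
      constructor
      · rintro ⟨hadj, _, hzC⟩
        have : z ∈ G.neighborFinset x := (SimpleGraph.mem_neighborFinset _ _ _).mpr hadj
        rw [hnbrx] at this
        rcases Finset.mem_insert.mp this with rfl | hz
        · exact absurd hzC hsC
        · exact Finset.mem_singleton.mp hz
      · rintro rfl
        exact ⟨hw_adj, x_mem_sideComp, hwC⟩
    rw [SimpleGraph.degree, this, Finset.card_singleton]
  -- handshake: another vertex of odd K-degree
  have heven := K.even_card_odd_degree_vertices
  have hxodd : x ∈ Finset.univ.filter (fun v => Odd (K.degree v)) := by
    simp only [Finset.mem_filter, Finset.mem_univ, true_and, hdegKx]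
    exact odd_one
  obtain ⟨u, hu_mem, hu_ne⟩ : ∃ u ∈ Finset.univ.filter (fun v => Odd (K.degree v)), u ≠ x := by
    apply Finset.exists_mem_ne
    rcases heven with ⟨c, hc⟩
    have h1 : 0 < (Finset.univ.filter (fun v => Odd (K.degree v))).card :=
      Finset.card_pos.mpr ⟨x, hxodd⟩
    omega
  have hu_odd : Odd (K.degree u) := (Finset.mem_filter.mp hu_mem).2
  have huC : u ∈ C := by
    by_contra huC
    have : K.neighborFinset u = ∅ := by
      ext z
      rw [SimpleGraph.mem_neighborFinset, hKadj]
      simp only [Finset.notMem_empty, iff_false]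
      rintro ⟨_, h, _⟩
      exact huC h
    rw [SimpleGraph.degree, this, Finset.card_empty] at hu_odd
    simp [Nat.odd_iff] at hu_odd
  have hKu_le : K.degree u ≤ 2 := le_trans (Finset.card_le_card (hKnbr_sub u)) (hdeg u)
  have hKu : K.degree u = 1 := by
    rcases hu_odd with ⟨c, hc⟩
    omega
  have huW : u ∉ W := sideComp_not_W huC hu_ne
  refine ⟨u, huC, ?_⟩
  -- every G-neighbor of u is a K-neighbor
  have hsub : G.neighborFinset u ⊆ K.neighborFinset u := by
    intro z hz
    rw [SimpleGraph.mem_neighborFinset] at hz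
    rw [SimpleGraph.mem_neighborFinset, hKadj]
    rcases eq_or_ne z x with rfl | hzx
    · exact ⟨hz, huC, x_mem_sideComp⟩
    · by_cases hzW : z ∈ W
      · exfalso
        have hzy : z ≠ y := by
          rintro rfl
          exact hky u huC hz
        have : u ∈ p.support :=
          interior_nbrs hdeg hp (List.mem_toFinset.mp hzW) hzx hzy hz.symm
        exact huW (List.mem_toFinset.mpr this)
      · have : z ∈ C := sideComp_adj huC ⟨hz, Or.inl huW, Or.inl hzW⟩
        exact ⟨hz, huC, this⟩
  calc G.degree u ≤ K.degree u := Finset.card_le_card hsub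
    _ ≤ 1 := le_of_eq hKu

lemma ncard_nbr_eq_degree [DecidableRel G.Adj] (v : V) :
    (G.neighborSet v).ncard = G.degree v := by
  rw [Set.ncard_eq_toFinset_card']
  congr 1

/-- The two side components are disjoint when `x,y` are far apart. -/
lemma sides_disjoint {x y : V} (p : G.Walk x y) (hp : p.IsPath)
    (hlen : p.length = G.dist x y) {k : ℕ} (hk : k ≤ G.dist x y)
    (hVk : Fintype.card V + 1 ≤ 2 * k) :
    Disjoint (sideComp G p.support.toFinset x) (sideComp G p.support.toFinset y) := by
  classical
  set W := p.support.toFinset with hW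
  set d := G.dist x y with hd
  by_contra hcon
  rw [Finset.not_disjoint_iff] at hcon
  set Hx := restrictG G {u | u ∉ W ∨ u = x} with hHx
  set Hy := restrictG G {u | u ∉ W ∨ u = y} with hHy
  set I := (sideComp G W x) ∩ (sideComp G W y) with hI
  have hIne : I.Nonempty := by
    obtain ⟨v, h1, h2⟩ := hcon
    exact ⟨v, Finset.mem_inter.mpr ⟨h1, h2⟩⟩
  obtain ⟨v, hvI, hvmin⟩ := Finset.exists_min_image I (fun v => Hx.dist x v) hIne
  have hvx : v ∈ sideComp G W x := (Finset.mem_inter.mp hvI).1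
  have hvy : v ∈ sideComp G W y := (Finset.mem_inter.mp hvI).2
  have hrx : Hx.Reachable x v := mem_sideComp.mp hvx
  have hry : Hy.Reachable y v := mem_sideComp.mp hvy
  obtain ⟨q1, hq1p, hq1l⟩ := hrx.exists_path_of_dist
  obtain ⟨q2, hq2p, hq2l⟩ := hry.exists_path_of_dist
  -- vertices of q1 other than v are not in sideComp y
  have hq1Cy : ∀ z ∈ q1.support, z ≠ v → z ∉ sideComp G W y := by
    intro z hz hzv hzy
    have hzx : z ∈ sideComp G W x := mem_sideComp.mpr ⟨q1.takeUntil z hz⟩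
    have hzI : z ∈ I := Finset.mem_inter.mpr ⟨hzx, hzy⟩
    have h1 := hvmin z hzI
    have h2 := dist_takeUntil (G := Hx) (hq1l.trans rfl) hz
    rw [hq1l] at h2
    have h3 := h2.1
    have h4 := h2.2 hzv
    omega
  -- supports as finsets
  have hA1card : q1.support.toFinset.card = q1.length + 1 := by
    rw [List.toFinset_card_of_nodup hq1p.support_nodup, SimpleGraph.Walk.length_support]
  have hA2card : q2.support.toFinset.card = q2.length + 1 := by
    rw [List.toFinset_card_of_nodup hq2p.support_nodup, SimpleGraph.Walk.length_support]
  have hA1sub : ∀ z ∈ q1.support, z ∈ sideComp G W x :=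
    fun z hz => mem_sideComp.mpr ⟨q1.takeUntil z hz⟩
  have hA2sub : ∀ z ∈ q2.support, z ∈ sideComp G W y :=
    fun z hz => mem_sideComp.mpr ⟨q2.takeUntil z hz⟩
  -- d ≤ q1.length + q2.length
  obtain ⟨w1, hw1s, hw1l⟩ := walk_mono (restrictG_le G _) q1
  obtain ⟨w2, hw2s, hw2l⟩ := walk_mono (restrictG_le G _) q2
  have hdle : d ≤ q1.length + q2.length := by
    have := SimpleGraph.dist_le (w1.append w2.reverse)
    rw [SimpleGraph.Walk.length_append, SimpleGraph.Walk.length_reverse, hw1l, hw2l, ← hd]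
      at this
    exact this
  -- cardinality bound
  have hdisj2 : Disjoint (q1.support.toFinset.erase v) q2.support.toFinset := by
    rw [Finset.disjoint_left]
    intro z hz1 hz2
    have hzv := Finset.ne_of_mem_erase hz1
    have hz1' := List.mem_toFinset.mp (Finset.mem_of_mem_erase hz1)
    exact hq1Cy z hz1' hzv (hA2sub z (List.mem_toFinset.mp hz2))
  have hbig : (q1.support.toFinset.erase v) ∪ q2.support.toFinset ⊆
      insert x (insert y (Finset.univ \ W)) := by
    intro z hz
    rcases Finset.mem_union.mp hz with hz | hz
    · have hzx : z ∈ sideComp G W x :=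
        hA1sub z (List.mem_toFinset.mp (Finset.mem_of_mem_erase hz))
      rcases eq_or_ne z x with rfl | hne
      · exact Finset.mem_insert_self _ _
      · exact Finset.mem_insert_of_mem (Finset.mem_insert_of_mem (Finset.mem_sdiff.mpr
          ⟨Finset.mem_univ _, sideComp_not_W hzx hne⟩))
    · have hzy : z ∈ sideComp G W y := hA2sub z (List.mem_toFinset.mp hz)
      rcases eq_or_ne z y with rfl | hne
      · exact Finset.mem_insert_of_mem (Finset.mem_insert_self _ _)
      · exact Finset.mem_insert_of_mem (Finset.mem_insert_of_mem (Finset.mem_sdiff.mpr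
          ⟨Finset.mem_univ _, sideComp_not_W hzy hne⟩))
  have hWcard : W.card = d + 1 := by
    rw [hW, List.toFinset_card_of_nodup hp.support_nodup,
      SimpleGraph.Walk.length_support, hlen]
  have htd : d + 1 ≤ Fintype.card V := by
    have := Finset.card_le_card (Finset.subset_univ W)
    rw [hWcard, Finset.card_univ] at this
    exact this
  have hrhs : (insert x (insert y (Finset.univ \ W))).card ≤ 2 + (Fintype.card V - (d + 1)) := by
    calc (insert x (insert y (Finset.univ \ W))).card
        ≤ (insert y (Finset.univ \ W)).card + 1 := Finset.card_insert_le _ _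
      _ ≤ ((Finset.univ \ W).card + 1) + 1 := by
          have := Finset.card_insert_le y (Finset.univ \ W)
          omega
      _ = 2 + (Fintype.card V - (d + 1)) := by
          rw [Finset.card_sdiff_of_subset (Finset.subset_univ W), Finset.card_univ, hWcard]
          omega
  have hlhs : (q1.support.toFinset.erase v).card + q2.support.toFinset.card
      ≤ (insert x (insert y (Finset.univ \ W))).card := by
    rw [← Finset.card_union_of_disjoint hdisj2]
    exact Finset.card_le_card hbig
  have hvq1 : v ∈ q1.support.toFinset := List.mem_toFinset.mpr (SimpleGraph.Walk.end_mem_support q1)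
  have herase : (q1.support.toFinset.erase v).card = q1.length := by
    rw [Finset.card_erase_of_mem hvq1, hA1card]
    omega
  omega

lemma toFinset_reverse' (l : List V) : l.reverse.toFinset = l.toFinset := by
  ext z
  simp [List.mem_toFinset]

/-- Far case: find two far-apart degree-≤1 vertices near `x` and `y`. -/
lemma far_case [DecidableRel G.Adj] (hdeg : ∀ v, G.degree v ≤ 2)
    {x y : V} (hreach : G.Reachable x y) {k : ℕ} (hk : k ≤ G.dist x y) (hk2 : 2 ≤ k)
    (hVk : Fintype.card V + 1 ≤ 2 * k) :
    ∃ e1 e2 : V, e1 ≠ e2 ∧ ¬ G.Adj e1 e2 ∧ G.degree e1 ≤ 1 ∧ G.degree e2 ≤ 1 ∧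
      G.Reachable x e1 ∧ G.Reachable y e2 ∧ G.dist x e1 + G.dist y e2 + 2 ≤ k := by
  classical
  obtain ⟨p, hpp, hpl⟩ := hreach.exists_path_of_dist
  set W := p.support.toFinset with hW
  set d := G.dist x y with hd
  have hrevW : p.reverse.support.toFinset = W := by
    rw [SimpleGraph.Walk.support_reverse, toFinset_reverse']
  obtain ⟨e1, he1C, he1d⟩ := side_lemma hdeg p hpp hpl hk hk2 hVk
  obtain ⟨e2, he2C', he2d⟩ := side_lemma hdeg p.reverse hpp.reverse
    (by rw [SimpleGraph.Walk.length_reverse, SimpleGraph.dist_comm]; exact hpl)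
    (by rw [SimpleGraph.dist_comm]; exact hk) hk2 hVk
  have he2C : e2 ∈ sideComp G W y := by rwa [hrevW] at he2C'
  have hdisj : Disjoint (sideComp G W x) (sideComp G W y) :=
    sides_disjoint p hpp hpl hk hVk
  -- cardinality bound on the union of the two side components
  have hWcard : W.card = d + 1 := by
    rw [hW, List.toFinset_card_of_nodup hpp.support_nodup,
      SimpleGraph.Walk.length_support, hpl]
  have htd : d + 1 ≤ Fintype.card V := by
    have := Finset.card_le_card (Finset.subset_univ W)
    rw [hWcard, Finset.card_univ] at this
    exact this
  have hsub : (sideComp G W x) ∪ (sideComp G W y) ⊆ insert x (insert y (Finset.univ \ W)) := by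
    intro z hz
    rcases Finset.mem_union.mp hz with hz | hz
    · rcases eq_or_ne z x with rfl | hne
      · exact Finset.mem_insert_self _ _
      · exact Finset.mem_insert_of_mem (Finset.mem_insert_of_mem (Finset.mem_sdiff.mpr
          ⟨Finset.mem_univ _, sideComp_not_W hz hne⟩))
    · rcases eq_or_ne z y with rfl | hne
      · exact Finset.mem_insert_of_mem (Finset.mem_insert_self _ _)
      · exact Finset.mem_insert_of_mem (Finset.mem_insert_of_mem (Finset.mem_sdiff.mpr
          ⟨Finset.mem_univ _, sideComp_not_W hz hne⟩))
  have hcard : (sideComp G W x).card + (sideComp G W y).card ≤ k := by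
    have h1 := Finset.card_le_card hsub
    rw [Finset.card_union_of_disjoint hdisj] at h1
    have h2 : (insert x (insert y (Finset.univ \ W))).card
        ≤ 2 + (Fintype.card V - (d + 1)) := by
      have i1 := Finset.card_insert_le x (insert y (Finset.univ \ W))
      have i2 := Finset.card_insert_le y (Finset.univ \ W)
      rw [Finset.card_sdiff_of_subset (Finset.subset_univ W), Finset.card_univ, hWcard] at i2
      omega
    omega
  obtain ⟨hre1, hd1⟩ := sideComp_dist he1C
  obtain ⟨hre2, hd2⟩ := sideComp_dist he2C
  rw [← hW] at hd1
  have hne : e1 ≠ e2 := by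
    intro h
    subst h
    exact (Finset.disjoint_left.mp hdisj) he1C he2C
  have hnadj : ¬ G.Adj e1 e2 := by
    intro hadj
    obtain ⟨u1, hu1p, hu1l⟩ := hre1.exists_path_of_dist
    obtain ⟨u2, hu2p, hu2l⟩ := hre2.exists_path_of_dist
    have := SimpleGraph.dist_le ((u1.concat hadj).append u2.reverse)
    rw [SimpleGraph.Walk.length_append, SimpleGraph.Walk.length_concat,
      SimpleGraph.Walk.length_reverse, hu1l, hu2l, ← hd] at this
    omega
  exact ⟨e1, e2, hne, hnadj, he1d, he2d, hre1, hre2, by omega⟩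

theorem conflict_graph_odd_set (t : ℕ) (ht : 11 ≤ t) (P : SimpleGraph (Fin t))
    (hdeg : ∀ v, (P.neighborSet v).ncard ≤ 2) :
    ∃ O : Finset (Fin t), O.card = (t + 2) / 2 ∧
      (⟨0, by omega⟩ : Fin t) ∈ O ∧ (⟨t - 1, by omega⟩ : Fin t) ∈ O ∧
      ∃ P' : SimpleGraph (Fin t), P ≤ P' ∧ (P'.edgeSet \ P.edgeSet).ncard ≤ 1 ∧
        (∀ v, (P'.neighborSet v).ncard ≤ 2) ∧
        {v ∈ (O : Set (Fin t)) | ∃ u ∉ O, P'.Adj v u}.ncard ≤ 2 ∧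
        ({v ∈ (O : Set (Fin t)) | ∃ u ∉ O, P'.Adj v u}.ncard = 2 →
          ∀ v ∈ O, {u : Fin t | u ∉ O ∧ P'.Adj v u}.ncard ≤ 1) := by
  classical
  set x : Fin t := ⟨0, by omega⟩ with hxdef
  set y : Fin t := ⟨t - 1, by omega⟩ with hydef
  set k : ℕ := (t + 2) / 2 with hkdef
  have hk2 : 6 ≤ k := by omega
  have hkt : k ≤ t := by omega
  have hVk : Fintype.card (Fin t) + 1 ≤ 2 * k := by rw [Fintype.card_fin]; omega
  suffices H : ∃ P' : SimpleGraph (Fin t), P ≤ P' ∧ (P'.edgeSet \ P.edgeSet).ncard ≤ 1 ∧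
      (∀ v, (P'.neighborSet v).ncard ≤ 2) ∧
      ∃ F0 S0 : Finset (Fin t), ClosedS P' F0 ∧ Conn P' S0 ∧ Disjoint F0 S0 ∧
        x ∈ F0 ∪ S0 ∧ y ∈ F0 ∪ S0 ∧ (F0 ∪ S0).card ≤ k by
    obtain ⟨P', hle, hdiff, hdeg2, F0, S0, hF0, hS0, hdisj0, hx0, hy0, hcard0⟩ := H
    haveI : DecidableRel P'.Adj := Classical.decRel _
    have hdeg2' : ∀ v, P'.degree v ≤ 2 := by
      intro v
      rw [← ncard_nbr_eq_degree]
      exact hdeg2 v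
    obtain ⟨F', S', hF', hS', hdisj', hsub', hcard'⟩ :=
      build P' (k - (F0 ∪ S0).card) F0 S0 hF0 hS0 hdisj0
        (by rw [Fintype.card_fin]; omega)
    set O := F' ∪ S' with hO
    have hOcard : O.card = k := by rw [hO, hcard']; omega
    have hSsubO : S' ⊆ O := Finset.subset_union_right
    have hF'O : ∀ v ∈ F', ∀ u, P'.Adj v u → u ∈ O := by
      intro v hv u hadj
      exact Finset.mem_union_left _ (hF' v hv u hadj)
    set BdF := S'.filter (fun v => (S'.filter (P'.Adj v)).card ≤ 1) with hBdF
    have hBdsub : {v ∈ (O : Set (Fin t)) | ∃ u ∉ O, P'.Adj v u} ⊆ (BdF : Set (Fin t)) := by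
      rintro v ⟨hvO, u, huO, hadj⟩
      have hvS : v ∈ S' := by
        rcases Finset.mem_union.mp hvO with h | h
        · exact absurd (hF'O v h u hadj) huO
        · exact h
      have huS : u ∉ S' := fun h => huO (hSsubO h)
      have hinner : (S'.filter (P'.Adj v)).card ≤ 1 := by
        have hsub2 : S'.filter (P'.Adj v) ⊆ (P'.neighborFinset v).erase u := by
          intro z hz
          obtain ⟨hzS, hzadj⟩ := Finset.mem_filter.mp hz
          refine Finset.mem_erase.mpr ⟨fun h => huS (h ▸ hzS), ?_⟩
          exact (SimpleGraph.mem_neighborFinset _ _ _).mpr hzadj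
        have h3 := Finset.card_le_card hsub2
        rw [Finset.card_erase_of_mem ((SimpleGraph.mem_neighborFinset _ _ _).mpr hadj)] at h3
        have h4 : (P'.neighborFinset v).card ≤ 2 := hdeg2' v
        omega
      exact Finset.mem_coe.mpr (Finset.mem_filter.mpr ⟨hvS, hinner⟩)
    have hBdcard : {v ∈ (O : Set (Fin t)) | ∃ u ∉ O, P'.Adj v u}.ncard ≤ 2 := by
      have h1 := Set.ncard_le_ncard hBdsub (Finset.finite_toSet _)
      rw [Set.ncard_coe_finset] at h1
      have h2 : BdF.card ≤ 2 := low_inner_count hdeg2' hS'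
      omega
    refine ⟨O, hOcard, hsub' hx0, hsub' hy0, P', hle, hdiff, hdeg2, hBdcard, ?_⟩
    intro hBd2 v hvO
    rcases Finset.mem_union.mp hvO with hvF | hvS
    · have : {u : Fin t | u ∉ O ∧ P'.Adj v u} = ∅ := by
        ext u
        simp only [Set.mem_setOf_eq, Set.mem_empty_iff_false, iff_false, not_and]
        intro huO
        exact fun hadj => huO (hF'O v hvF u hadj)
      rw [this]
      simp
    · by_cases hS1 : S'.card ≤ 1
      · exfalso
        have h1 := Set.ncard_le_ncard hBdsub (Finset.finite_toSet _)
        rw [Set.ncard_coe_finset] at h1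
        have h2 : BdF.card ≤ 1 :=
          le_trans (Finset.card_le_card (Finset.filter_subset _ _)) hS1
        omega
      · obtain ⟨u0, hu0S, hu0adj⟩ := exists_inner hS' (by omega) v hvS
        have hsub3 : {u : Fin t | u ∉ O ∧ P'.Adj v u} ⊆ (P'.neighborSet v) \ {u0} := by
          rintro z ⟨hzO, hzadj⟩
          refine ⟨hzadj, ?_⟩
          simp only [Set.mem_singleton_iff]
          rintro rfl
          exact hzO (hSsubO hu0S)
        have h1 := Set.ncard_le_ncard hsub3 (Set.toFinite _)
        have h2 : ((P'.neighborSet v) \ {u0}).ncard = (P'.neighborSet v).ncard - 1 :=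
          Set.ncard_diff_singleton_of_mem hu0adj
        have h3 := hdeg2 v
        have h4 : 1 ≤ (P'.neighborSet v).ncard := by
          rw [ncard_nbr_eq_degree]
          have : u0 ∈ P'.neighborFinset v := (SimpleGraph.mem_neighborFinset _ _ _).mpr hu0adj
          exact Finset.card_pos.mpr ⟨u0, this⟩
      
        omega
  -- Now produce P', F0, S0 by cases.
  haveI : DecidableRel P.Adj := Classical.decRel _
  have hdegP : ∀ v, P.degree v ≤ 2 := by
    intro v
    rw [← ncard_nbr_eq_degree]
    exact hdeg v
  by_cases hreach : P.Reachable x y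
  · by_cases hnear : P.dist x y + 1 ≤ k
    · -- near case: one connected piece containing both x and y
      obtain ⟨p, hpp, hpl⟩ := hreach.exists_path_of_dist
      refine ⟨P, le_refl _, by simp, hdeg, ∅, p.support.toFinset,
        fun v hv => absurd hv (Finset.notMem_empty v), conn_support p,
        Finset.disjoint_empty_left _, ?_, ?_, ?_⟩
      · exact Finset.mem_union_right _ (List.mem_toFinset.mpr p.start_mem_support)
      · exact Finset.mem_union_right _ (List.mem_toFinset.mpr p.end_mem_support)
      · rw [Finset.empty_union]
        have h1 := List.toFinset_card_le p.support
        rw [SimpleGraph.Walk.length_support, hpl] at h1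
        omega
    · -- far case: add one edge between two degree-≤1 vertices
      obtain ⟨e1, e2, hne, hnadj, hd1, hd2, hre1, hre2, hsum⟩ :=
        far_case hdegP hreach (by omega) (by omega) hVk
      set P' : SimpleGraph (Fin t) :=
        { Adj := fun a b => P.Adj a b ∨ (a = e1 ∧ b = e2) ∨ (a = e2 ∧ b = e1)
          symm := ⟨by
            rintro a b (h | ⟨h1, h2⟩ | ⟨h1, h2⟩)
            · exact Or.inl h.symm
            · exact Or.inr (Or.inr ⟨h2, h1⟩)
            · exact Or.inr (Or.inl ⟨h2, h1⟩)⟩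
          loopless := ⟨by
            rintro a (h | ⟨h1, h2⟩ | ⟨h1, h2⟩)
            · exact P.irrefl h
            · exact hne (h1 ▸ h2 ▸ rfl)
            · exact hne (h2 ▸ h1 ▸ rfl)⟩ } with hP'
      have hle : P ≤ P' := fun a b h => Or.inl h
      have hP'adj : P'.Adj e1 e2 := Or.inr (Or.inl ⟨rfl, rfl⟩)
      have hdiff : (P'.edgeSet \ P.edgeSet).ncard ≤ 1 := by
        have hsub : P'.edgeSet \ P.edgeSet ⊆ {s(e1, e2)} := by
          intro e he
          induction e with
          | h a b =>
            obtain ⟨h1, h2⟩ := he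
            rw [SimpleGraph.mem_edgeSet] at h1
            rcases h1 with h | ⟨rfl, rfl⟩ | ⟨rfl, rfl⟩
            · exact absurd ((SimpleGraph.mem_edgeSet _).mpr h) h2
            · rfl
            · exact Sym2.eq_swap
        have := Set.ncard_le_ncard hsub (Set.finite_singleton _)
        rwa [Set.ncard_singleton] at this
      have hdeg1' : (P.neighborSet e1).ncard ≤ 1 := by
        rw [ncard_nbr_eq_degree]
        exact hd1
      have hdeg2'' : (P.neighborSet e2).ncard ≤ 1 := by
        rw [ncard_nbr_eq_degree]
        exact hd2
      have hdegP' : ∀ v, (P'.neighborSet v).ncard ≤ 2 := by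
        intro v
        rcases eq_or_ne v e1 with rfl | hv1
        · have hsub : P'.neighborSet v ⊆ P.neighborSet v ∪ {e2} := by
            rintro z (h | ⟨h1, h2⟩ | ⟨h1, h2⟩)
            · exact Or.inl h
            · exact Or.inr (h2 ▸ rfl)
            · exact absurd h1 hne
          have h1 := Set.ncard_le_ncard hsub ((Set.toFinite _).union (Set.finite_singleton _))
          have h2 := Set.ncard_union_le (P.neighborSet v) {e2}
          rw [Set.ncard_singleton] at h2
          omega
        · rcases eq_or_ne v e2 with rfl | hv2
          · have hsub : P'.neighborSet v ⊆ P.neighborSet v ∪ {e1} := by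
              rintro z (h | ⟨h1, h2⟩ | ⟨h1, h2⟩)
              · exact Or.inl h
              · exact absurd h1 hne.symm
              · exact Or.inr (h2 ▸ rfl)
            have h1 := Set.ncard_le_ncard hsub ((Set.toFinite _).union (Set.finite_singleton _))
            have h2 := Set.ncard_union_le (P.neighborSet v) {e1}
            rw [Set.ncard_singleton] at h2
            omega
          · have heq : P'.neighborSet v = P.neighborSet v := by
              ext z
              constructor
              · rintro (h | ⟨h1, h2⟩ | ⟨h1, h2⟩)
                · exact h
                · exact absurd h1 hv1
                · exact absurd h1 hv2
              · exact fun h => Or.inl h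
            rw [heq]
            exact hdeg v
      -- x and y are close in P'
      obtain ⟨w1, hw1p, hw1l⟩ := hre1.exists_path_of_dist
      obtain ⟨w2, hw2p, hw2l⟩ := hre2.exists_path_of_dist
      obtain ⟨w1', hw1's, hw1'l⟩ := walk_mono hle w1
      obtain ⟨w2', hw2's, hw2'l⟩ := walk_mono hle w2
      have hwalk : P'.Reachable x y ∧ P'.dist x y + 1 ≤ k := by
        have hw : P'.Walk x y := (w1'.concat hP'adj).append w2'.reverse
        refine ⟨⟨(w1'.concat hP'adj).append w2'.reverse⟩, ?_⟩
        have := SimpleGraph.dist_le ((w1'.concat hP'adj).append w2'.reverse)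
        rw [SimpleGraph.Walk.length_append, SimpleGraph.Walk.length_concat,
          SimpleGraph.Walk.length_reverse, hw1'l, hw2'l, hw1l, hw2l] at this
        omega
      obtain ⟨p, hpp, hpl⟩ := hwalk.1.exists_path_of_dist
      refine ⟨P', hle, hdiff, hdegP', ∅, p.support.toFinset,
        fun v hv => absurd hv (Finset.notMem_empty v), conn_support p,
        Finset.disjoint_empty_left _, ?_, ?_, ?_⟩
      · exact Finset.mem_union_right _ (List.mem_toFinset.mpr p.start_mem_support)
      · exact Finset.mem_union_right _ (List.mem_toFinset.mpr p.end_mem_support)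
      · rw [Finset.empty_union]
        have h1 := List.toFinset_card_le p.support
        rw [SimpleGraph.Walk.length_support, hpl] at h1
        omega
  · -- x and y in different components
    set Cx := Finset.univ.filter (fun v => P.Reachable x v) with hCx
    set Cy := Finset.univ.filter (fun v => P.Reachable y v) with hCy
    have hxCx : x ∈ Cx := Finset.mem_filter.mpr ⟨Finset.mem_univ _, SimpleGraph.Reachable.refl x⟩
    have hyCy : y ∈ Cy := Finset.mem_filter.mpr ⟨Finset.mem_univ _, SimpleGraph.Reachable.refl y⟩
    have hCxcl : ClosedS P Cx := by
      intro v hv u hadj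
      exact Finset.mem_filter.mpr ⟨Finset.mem_univ _,
        ((Finset.mem_filter.mp hv).2).trans hadj.reachable⟩
    have hCycl : ClosedS P Cy := by
      intro v hv u hadj
      exact Finset.mem_filter.mpr ⟨Finset.mem_univ _,
        ((Finset.mem_filter.mp hv).2).trans hadj.reachable⟩
    have hdisjC : Disjoint Cx Cy := by
      rw [Finset.disjoint_left]
      intro z hz1 hz2
      exact hreach (((Finset.mem_filter.mp hz1).2).trans
        ((Finset.mem_filter.mp hz2).2).symm)
    have hsumC : Cx.card + Cy.card ≤ t := by
      have h1 := Finset.card_le_card (Finset.subset_univ (Cx ∪ Cy))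
      rw [Finset.card_union_of_disjoint hdisjC, Finset.card_univ, Fintype.card_fin] at h1
      exact h1
    have hyCx : y ∉ Cx := fun h => hreach (Finset.mem_filter.mp h).2
    have hxCy : x ∉ Cy := fun h => hreach ((Finset.mem_filter.mp h).2).symm
    rcases le_total Cx.card Cy.card with hle2 | hle2
    · refine ⟨P, le_refl _, by simp, hdeg, Cx, {y}, hCxcl, conn_singleton P y, ?_, ?_, ?_, ?_⟩
      · rw [Finset.disjoint_singleton_right]
        exact hyCx
      · exact Finset.mem_union_left _ hxCx
      · exact Finset.mem_union_right _ (Finset.mem_singleton_self y)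
      · have := Finset.card_union_le Cx {y}
        rw [Finset.card_singleton] at this
        omega
    · refine ⟨P, le_refl _, by simp, hdeg, Cy, {x}, hCycl, conn_singleton P x, ?_, ?_, ?_, ?_⟩
      · rw [Finset.disjoint_singleton_right]
        exact hxCy
      · exact Finset.mem_union_right _ (Finset.mem_singleton_self x)
      · exact Finset.mem_union_left _ hyCy
      · have := Finset.card_union_le Cy {x}
        rw [Finset.card_singleton] at this
        omega
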